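/- Let X be a (λ,k,E,C,θ,L)-coarsely convex space with base point O, and let γ, γ' ∈ L̄_O be good quasi-geodesics (segments or rays) starting at O. Set D := 2(1+E)k₁ + C with k₁ = λ + k, θ̃(t) := θ(t+1)+1, and define the product (γ|γ') := sup{ t ∈ Dom γ ∩ Dom γ' : d(γ(t), γ'(t)) ≤ 2D+2 }. Then for any t ∈ Dom γ, t' ∈ Dom γ', setting α := d(γ(t), γ'(t')), we have (γ | γ') ≥ (max{t,t'} − θ̃(α)) / (E(α + λθ̃(α) + k₁)). -/

import Mathlib

/-- Down-closedness of a scaling-closed subset of `[0,∞)` containing `0`. -/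
lemma mem_of_le_of_scale {S : Set ℝ} (h0 : (0:ℝ) ∈ S)
    (hsc : ∀ a ∈ S, ∀ c ∈ Set.Icc (0:ℝ) 1, c * a ∈ S)
    {a : ℝ} (ha : a ∈ S) {b : ℝ} (hb0 : 0 ≤ b) (hba : b ≤ a) : b ∈ S := by
  rcases lt_or_eq_of_le (hb0.trans hba) with hpos | heq
  · have hb : b = (b / a) * a := by field_simp
    rw [hb]
    exact hsc a ha _ ⟨div_nonneg hb0 hpos.le, (div_le_one hpos).mpr hba⟩
  · have hb : b = 0 := by linarith [heq.le, heq.ge]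
    rwa [hb]

/-- Lower estimate of the Gromov-type product along a bigon (Lemma `prod-est-bigon`):
for good quasi-geodesics `γ, γ'` starting at `O` in a coarsely convex space (modelled
abstractly via the coarse convexity inequality, the reparametrization bound, and the
quasi-geodesic upper bound, with domains closed under scaling by `c ∈ [0,1]`), and
`t ∈ Dom γ`, `t' ∈ Dom γ'` with `α := d(γ(t), γ'(t'))`, the product
`(γ|γ') = sup{u ∈ Dom γ ∩ Dom γ' : d(γ(u), γ'(u)) ≤ 2D+2}` (as a value in `[0,∞]`)
satisfies `(γ|γ') ≥ (max t t' − θ̃(α)) / (E(α + λθ̃(α) + k₁))`. -/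
theorem stmt_13 {X : Type*} [MetricSpace X] (O : X)
    (lam k₁ E D : ℝ) (hlam : 1 ≤ lam) (hk₁ : 0 ≤ k₁) (hE : 1 ≤ E) (hD : 0 ≤ D)
    (θt : ℝ → ℝ) (hθmono : Monotone θt) (hθ1 : ∀ s, 1 ≤ θt s)
    (γ γ' : ℝ → X) (Dγ Dγ' : Set ℝ)
    (hD0 : (0:ℝ) ∈ Dγ) (hD0' : (0:ℝ) ∈ Dγ')
    (hsub : Dγ ⊆ Set.Ici 0) (hsub' : Dγ' ⊆ Set.Ici 0)
    (hscale : ∀ t ∈ Dγ, ∀ c ∈ Set.Icc (0:ℝ) 1, c * t ∈ Dγ)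
    (hscale' : ∀ t ∈ Dγ', ∀ c ∈ Set.Icc (0:ℝ) 1, c * t ∈ Dγ')
    (hO : γ 0 = O) (hO' : γ' 0 = O)
    (hqg : ∀ s ∈ Dγ, ∀ t ∈ Dγ, dist (γ s) (γ t) ≤ lam * |s - t| + k₁)
    (hqg' : ∀ s ∈ Dγ', ∀ t ∈ Dγ', dist (γ' s) (γ' t) ≤ lam * |s - t| + k₁)
    (hconv : ∀ t ∈ Dγ, ∀ s ∈ Dγ', ∀ c ∈ Set.Icc (0:ℝ) 1,
      dist (γ (c * t)) (γ' (c * s)) ≤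
        c * E * dist (γ t) (γ' s) + (1 - c) * E * dist (γ 0) (γ' 0) + D)
    (hreparam : ∀ t ∈ Dγ, ∀ s ∈ Dγ',
      |t - s| ≤ θt (dist (γ 0) (γ' 0) + dist (γ t) (γ' s)))
    (t t' : ℝ) (ht : t ∈ Dγ) (ht' : t' ∈ Dγ') :
    ENNReal.ofReal ((max t t' - θt (dist (γ t) (γ' t'))) /
        (E * (dist (γ t) (γ' t') + lam * θt (dist (γ t) (γ' t')) + k₁)))
      ≤ ⨆ u ∈ {u : ℝ | u ∈ Dγ ∧ u ∈ Dγ' ∧ dist (γ u) (γ' u) ≤ 2 * D + 2},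
          ENNReal.ofReal u := by
  set α := dist (γ t) (γ' t') with hαdef
  have hα0 : 0 ≤ α := dist_nonneg
  have hOO : dist (γ 0) (γ' 0) = 0 := by rw [hO, hO', dist_self]
  set θ := θt α with hθdef
  have hθ1' : (1:ℝ) ≤ θ := hθ1 α
  have htt' : |t - t'| ≤ θ := by
    have h := hreparam t ht t' ht'
    rwa [hOO, zero_add] at h
  have ht0 : 0 ≤ t := hsub ht
  have ht0' : 0 ≤ t' := hsub' ht'
  set Q := E * (α + lam * θ + k₁) with hQdef
  have hlt : (1:ℝ) ≤ lam * θ := by nlinarith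
  have hQ1 : (1:ℝ) ≤ Q := by nlinarith
  have hQ0 : (0:ℝ) < Q := lt_of_lt_of_le one_pos hQ1
  set N := max t t' - θ with hNdef
  rcases le_or_gt N 0 with hN | hN
  · have h0 : N / Q ≤ 0 := div_nonpos_of_nonpos_of_nonneg hN hQ0.le
    rw [ENNReal.ofReal_eq_zero.mpr h0]
    exact zero_le
  · set m := min t t' with hmdef
    have hmmin : N ≤ m := by
      have h := max_sub_min_eq_abs t t'
      have : max t t' - m ≤ θ := by rw [hmdef, h, abs_sub_comm t' t]; exact htt'
      linarith
    have hm0 : 0 < m := lt_of_lt_of_le hN hmmin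
    set r := N / Q with hrdef
    have hr0 : 0 < r := div_pos hN hQ0
    have hrN : r ≤ N := div_le_self hN.le hQ1
    have hrm : r ≤ m := hrN.trans hmmin
    have hmγ : m ∈ Dγ := mem_of_le_of_scale hD0 hscale ht hm0.le (min_le_left t t')
    have hmγ' : m ∈ Dγ' := mem_of_le_of_scale hD0' hscale' ht' hm0.le (min_le_right t t')
    have hrγ : r ∈ Dγ := mem_of_le_of_scale hD0 hscale hmγ hr0.le hrm
    have hrγ' : r ∈ Dγ' := mem_of_le_of_scale hD0' hscale' hmγ' hr0.le hrm
    set c := r / m with hcdef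
    have hc : c ∈ Set.Icc (0:ℝ) 1 :=
      ⟨div_nonneg hr0.le hm0.le, (div_le_one hm0).mpr hrm⟩
    have hcm : c * m = r := div_mul_cancel₀ r hm0.ne'
    have hdm : dist (γ m) (γ' m) ≤ α + lam * θ + k₁ := by
      rcases le_total t t' with h | h
      · rw [hmdef, min_eq_left h]
        have h1 : dist (γ t) (γ' t) ≤ dist (γ t) (γ' t') + dist (γ' t') (γ' t) :=
          dist_triangle _ _ _
        have htD' : t ∈ Dγ' := mem_of_le_of_scale hD0' hscale' ht' ht0 h
        have h2 : dist (γ' t') (γ' t) ≤ lam * |t' - t| + k₁ := hqg' t' ht' t htD'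
        have h3 : |t' - t| ≤ θ := by rw [abs_sub_comm t' t]; exact htt'
        have h4 : lam * |t' - t| ≤ lam * θ :=
          mul_le_mul_of_nonneg_left h3 (by linarith)
        linarith
      · rw [hmdef, min_eq_right h]
        have h1 : dist (γ t') (γ' t') ≤ dist (γ t') (γ t) + dist (γ t) (γ' t') :=
          dist_triangle _ _ _
        have h2 : dist (γ t') (γ t) ≤ lam * |t' - t| + k₁ := hqg t' (by
          exact mem_of_le_of_scale hD0 hscale ht ht0' h) t ht
        have h3 : |t' - t| ≤ θ := by rw [abs_sub_comm t' t]; exact htt'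
        have h4 : lam * |t' - t| ≤ lam * θ :=
          mul_le_mul_of_nonneg_left h3 (by linarith)
        linarith
    have hconv' := hconv m hmγ m hmγ' c hc
    rw [hcm, hOO] at hconv'
    have key : dist (γ r) (γ' r) ≤ 2 * D + 2 := by
      have h1 : c * E * dist (γ m) (γ' m) ≤ c * Q := by
        rw [hQdef, ← mul_assoc]
        have : 0 ≤ c * E := mul_nonneg hc.1 (by linarith)
        exact mul_le_mul_of_nonneg_left hdm this
      have h2 : c * Q = N / m := by
        rw [hcdef, hrdef]
        field_simp
      have h3 : N / m ≤ 1 := (div_le_one hm0).mpr hmmin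
      have h4 : (1 - c) * E * 0 = 0 := by ring
      rw [h4] at hconv'
      linarith
    exact le_iSup₂_of_le r ⟨hrγ, hrγ', key⟩ le_rfl
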